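/- Let f and p* be probability densities with Hellinger distance H(f, p*), and fix a truncation level τ > 0. Define Z_f(x) = max(log(f(x)/p*(x)), −τ). Then for every integer j ≥ 2, E_{p*}|Z_f(X)|^j ≤ j! · 2^j · c₀ · H²(f, p*), where c₀ = (e^{τ/2} − 1 − τ/2)/(1 − e^{−τ/2})². -/

import Mathlib

open MeasureTheory Real

private lemma tail_le (t : ℝ) (ht : 0 ≤ t) {j : ℕ} (hj : 2 ≤ j) :
    t ^ j / j.factorial ≤ Real.exp t - 1 - t := by
  have hsum := Real.sum_le_exp_of_nonneg ht (j + 1)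
  have hsplit : (∑ i ∈ Finset.range 2, t ^ i / i.factorial)
      + ∑ i ∈ Finset.Ico 2 (j + 1), t ^ i / i.factorial
      = ∑ i ∈ Finset.range (j + 1), t ^ i / i.factorial := by
    simp only [Finset.range_eq_Ico]
    exact Finset.sum_Ico_consecutive _ (by omega) (by omega)
  have h2 : (∑ i ∈ Finset.range 2, t ^ i / (i.factorial : ℝ)) = 1 + t := by
    simp [Finset.sum_range_succ]
  have hmem : j ∈ Finset.Ico 2 (j + 1) := by simp [Finset.mem_Ico]; omega
  have hsingle : t ^ j / (j.factorial : ℝ) ≤ ∑ i ∈ Finset.Ico 2 (j + 1), t ^ i / i.factorial :=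
    Finset.single_le_sum (f := fun i => t ^ i / (i.factorial : ℝ)) (fun i _ => by positivity) hmem
  linarith

private lemma aux_g (t : ℝ) (ht : 0 ≤ t) :
    0 ≤ Real.exp (2 * t) - 4 * Real.exp t + 3 + 2 * t := by
  set G : ℝ → ℝ := fun u => Real.exp (2 * u) - 4 * Real.exp u + 3 + 2 * u with hG
  have hd : ∀ s : ℝ, HasDerivAt G (2 * Real.exp (2 * s) - 4 * Real.exp s + 2) s := by
    intro s
    have h1 : HasDerivAt (fun u : ℝ => Real.exp (2 * u)) (Real.exp (2 * s) * (2 * 1)) s :=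
      (Real.hasDerivAt_exp (2 * s)).comp s ((hasDerivAt_id s).const_mul 2)
    have h2 := ((h1.sub ((Real.hasDerivAt_exp s).const_mul 4)).add_const 3).add
      ((hasDerivAt_id s).const_mul 2)
    refine h2.congr_deriv ?_
    ring
  have hmono : Monotone G := by
    apply monotone_of_deriv_nonneg (fun s => (hd s).differentiableAt)
    intro s
    rw [(hd s).deriv]
    have h2 : Real.exp (2 * s) = Real.exp s ^ 2 := by rw [two_mul, Real.exp_add, sq]
    nlinarith [sq_nonneg (Real.exp s - 1)]
  have h0 : G 0 = 0 := by norm_num [hG]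
  have := hmono ht
  rw [h0] at this
  simpa [hG] using this

private lemma case_pos (t : ℝ) (ht : 0 ≤ t) :
    Real.exp t - 1 - t ≤ 1 / 2 * (Real.exp t - 1) ^ 2 := by
  set F : ℝ → ℝ := fun u => Real.exp (2 * u) / 2 - 2 * Real.exp u + 3 / 2 + u with hF
  have hd : ∀ s : ℝ, HasDerivAt F (Real.exp (2 * s) - 2 * Real.exp s + 1) s := by
    intro s
    have h1 : HasDerivAt (fun u : ℝ => Real.exp (2 * u)) (Real.exp (2 * s) * (2 * 1)) s :=
      (Real.hasDerivAt_exp (2 * s)).comp s ((hasDerivAt_id s).const_mul 2)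
    have h2 := ((h1.div_const 2).sub ((Real.hasDerivAt_exp s).const_mul 2)).add_const (3 / 2)
    have h3 := h2.add (hasDerivAt_id s)
    refine h3.congr_deriv ?_
    ring
  have hmono : Monotone F := by
    apply monotone_of_deriv_nonneg (fun s => (hd s).differentiableAt)
    intro s
    rw [(hd s).deriv]
    have h2 : Real.exp (2 * s) = Real.exp s ^ 2 := by rw [two_mul, Real.exp_add, sq]
    nlinarith [sq_nonneg (Real.exp s - 1)]
  have h0 : F 0 = 0 := by norm_num [hF]
  have hFt := hmono ht
  rw [h0] at hFt
  have h2 : Real.exp (2 * t) = Real.exp t ^ 2 := by rw [two_mul, Real.exp_add, sq]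
  simp only [hF, h2] at hFt
  nlinarith

private lemma numer_nonneg (t : ℝ) (ht : 0 < t) :
    0 ≤ (Real.exp t - 1) * (1 - Real.exp (-t)) ^ 2 -
      (Real.exp t - 1 - t) * (2 * (1 - Real.exp (-t)) * Real.exp (-t)) := by
  have ha := Real.exp_pos t
  have ha1 : 1 ≤ Real.exp t := Real.one_le_exp ht.le
  have hg := aux_g t ht.le
  have h2 : Real.exp (2 * t) = Real.exp t ^ 2 := by rw [two_mul, Real.exp_add, sq]
  rw [h2] at hg
  rw [Real.exp_neg]
  have key : (Real.exp t - 1) * (1 - (Real.exp t)⁻¹) ^ 2 -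
      (Real.exp t - 1 - t) * (2 * (1 - (Real.exp t)⁻¹) * (Real.exp t)⁻¹)
      = (Real.exp t - 1) * (Real.exp t ^ 2 - 4 * Real.exp t + 3 + 2 * t) / Real.exp t ^ 2 := by
    field_simp
    ring
  rw [key]
  apply div_nonneg (mul_nonneg (by linarith) (by linarith)) (by positivity)

private lemma denom_pos (t : ℝ) (ht : 0 < t) : 0 < (1 - Real.exp (-t)) ^ 2 := by
  have : Real.exp (-t) < 1 := by
    have := Real.exp_lt_exp.mpr (show -t < 0 by linarith)
    rwa [Real.exp_zero] at this
  have h1 : (0:ℝ) < 1 - Real.exp (-t) := by linarith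
  positivity

private lemma phi_mono :
    MonotoneOn (fun t => (Real.exp t - 1 - t) / (1 - Real.exp (-t)) ^ 2) (Set.Ioi (0 : ℝ)) := by
  have hder : ∀ t ∈ Set.Ioi (0 : ℝ), HasDerivAt
      (fun t => (Real.exp t - 1 - t) / (1 - Real.exp (-t)) ^ 2)
      (((Real.exp t - 1) * (1 - Real.exp (-t)) ^ 2 -
        (Real.exp t - 1 - t) * (2 * (1 - Real.exp (-t)) * Real.exp (-t)))
        / ((1 - Real.exp (-t)) ^ 2) ^ 2) t := by
    intro t ht
    have hN : HasDerivAt (fun u : ℝ => Real.exp u - 1 - u) (Real.exp t - 1) t := by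
      exact ((Real.hasDerivAt_exp t).sub_const 1).sub (hasDerivAt_id t)
    have hE : HasDerivAt (fun u : ℝ => 1 - Real.exp (-u)) (Real.exp (-t)) t := by
      have h1 : HasDerivAt (fun u : ℝ => Real.exp (-u)) (Real.exp (-t) * (-1)) t :=
        (Real.hasDerivAt_exp (-t)).comp t (hasDerivAt_neg t)
      have := h1.const_sub 1
      refine this.congr_deriv ?_
      ring
    have hD : HasDerivAt (fun u : ℝ => (1 - Real.exp (-u)) ^ 2)
        (2 * (1 - Real.exp (-t)) * Real.exp (-t)) t := by
      have := hE.pow 2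
      refine this.congr_deriv ?_
      ring
    exact hN.div hD (ne_of_gt (denom_pos t ht))
  apply monotoneOn_of_deriv_nonneg (convex_Ioi 0)
  · apply ContinuousOn.div
    · fun_prop
    · fun_prop
    · exact fun t ht => ne_of_gt (denom_pos t ht)
  · rw [interior_Ioi]
    exact fun t ht => (hder t ht).differentiableAt.differentiableWithinAt
  · rw [interior_Ioi]
    intro t ht
    rw [(hder t ht).deriv]
    exact div_nonneg (numer_nonneg t ht) (by positivity)

private lemma c₀_half (τ : ℝ) (hτ : 0 < τ) (c₀ : ℝ)
    (hc₀ : c₀ = (Real.exp (τ / 2) - 1 - τ / 2) / (1 - Real.exp (-τ / 2)) ^ 2) :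
    1 / 2 ≤ c₀ := by
  set s := τ / 2 with hs
  have hs0 : 0 < s := by positivity
  rw [neg_div] at hc₀
  have h1 : s ^ 2 / 2 ≤ Real.exp s - 1 - s := by
    have := tail_le s hs0.le (le_refl 2)
    norm_num [Nat.factorial] at this
    linarith
  have hden : 0 < (1 - Real.exp (-s)) ^ 2 := denom_pos s hs0
  have hub : (1 - Real.exp (-s)) ^ 2 ≤ s ^ 2 := by
    have h := Real.add_one_le_exp (-s)
    have h2 : Real.exp (-s) ≤ 1 := by
      have := Real.exp_le_exp.mpr (show -s ≤ 0 by linarith)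
      rwa [Real.exp_zero] at this
    nlinarith
  rw [hc₀]
  calc (1:ℝ) / 2 = (s ^ 2 / 2) / s ^ 2 := by field_simp
    _ ≤ (Real.exp s - 1 - s) / (1 - Real.exp (-s)) ^ 2 :=
        div_le_div₀ (by nlinarith) h1 hden hub

private lemma exp_bound (τ : ℝ) (hτ : 0 < τ) (c₀ : ℝ)
    (hc₀ : c₀ = (Real.exp (τ / 2) - 1 - τ / 2) / (1 - Real.exp (-τ / 2)) ^ 2)
    (z : ℝ) (hz : -τ ≤ z) :
    Real.exp (|z| / 2) - 1 - |z| / 2 ≤ c₀ * (Real.exp (z / 2) - 1) ^ 2 := by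
  have hchalf := c₀_half τ hτ c₀ hc₀
  rcases le_or_gt 0 z with h | h
  · rw [abs_of_nonneg h]
    have h1 := case_pos (z / 2) (by linarith)
    nlinarith [sq_nonneg (Real.exp (z / 2) - 1)]
  · rw [abs_of_neg h]
    set t := -z / 2 with hT
    have ht0 : 0 < t := by simp [hT]; linarith
    have hts : t ≤ τ / 2 := by simp [hT]; linarith
    have hsmem : τ / 2 ∈ Set.Ioi (0:ℝ) := by simp; positivity
    have hφ := phi_mono (Set.mem_Ioi.mpr ht0) hsmem hts
    rw [neg_div] at hc₀
    have hcval : (Real.exp (τ/2) - 1 - τ/2) / (1 - Real.exp (-(τ/2))) ^ 2 = c₀ := hc₀.symm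
    simp only at hφ
    rw [hcval] at hφ
    have hden := denom_pos t ht0
    have hNle : Real.exp t - 1 - t ≤ c₀ * (1 - Real.exp (-t)) ^ 2 :=
      (div_le_iff₀ hden).mp hφ
    have hzt : z / 2 = -t := by rw [hT]; ring
    rw [hzt]
    have : (Real.exp (-t) - 1) ^ 2 = (1 - Real.exp (-t)) ^ 2 := by ring
    rw [this]
    exact hNle

private lemma sqrt_exp_half (r : ℝ) (hr : 0 < r) : Real.exp (Real.log r / 2) = Real.sqrt r := by
  rw [Real.sqrt_eq_rpow, Real.rpow_def_of_pos hr]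
  congr 1
  ring

/-- Wong–Shen moment bound for the truncated log-likelihood ratio
`Z_f(x) = max(log(f(x)/p*(x)), -τ)`: for every `j ≥ 2`,
`E_{p*}|Z_f|ʲ ≤ j! · 2ʲ · c₀ · H²(f, p*)` with
`c₀ = (e^{τ/2} - 1 - τ/2)/(1 - e^{-τ/2})²`. -/
theorem truncated_loglik_moment_bound
    {X : Type*} [MeasurableSpace X] (μ : Measure X) [SigmaFinite μ]
    (f pstar : X → ℝ)
    (hfmeas : Measurable f) (hpmeas : Measurable pstar)
    (hf0 : ∀ x, 0 < f x) (hp0 : ∀ x, 0 < pstar x)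
    (hf1 : ∫ x, f x ∂μ = 1) (hp1 : ∫ x, pstar x ∂μ = 1)
    (τ : ℝ) (hτ : 0 < τ)
    (Zf : X → ℝ) (hZf : ∀ x, Zf x = max (Real.log (f x / pstar x)) (-τ))
    (H2 : ℝ) (hH2 : H2 = ∫ x, (Real.sqrt (f x) - Real.sqrt (pstar x)) ^ 2 ∂μ)
    (c₀ : ℝ)
    (hc₀ : c₀ = (Real.exp (τ / 2) - 1 - τ / 2) / (1 - Real.exp (-τ / 2)) ^ 2) :
    ∀ j : ℕ, 2 ≤ j →
      ∫ x, |Zf x| ^ j * pstar x ∂μ ≤ (Nat.factorial j : ℝ) * 2 ^ j * c₀ * H2 := by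
  intro j hj
  have hc : (0:ℝ) < c₀ := lt_of_lt_of_le (by norm_num) (c₀_half τ hτ c₀ hc₀)
  set C : ℝ := (Nat.factorial j : ℝ) * 2 ^ j * c₀ with hC
  have hCpos : 0 < C := by positivity
  -- step 3 : truncation vs sqrt
  have hstep3 : ∀ x, (Real.exp (Zf x / 2) - 1) ^ 2 * pstar x
      ≤ (Real.sqrt (f x) - Real.sqrt (pstar x)) ^ 2 := by
    intro x
    have hr : 0 < f x / pstar x := div_pos (hf0 x) (hp0 x)
    have hfact : Real.sqrt (f x) - Real.sqrt (pstar x)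
        = Real.sqrt (pstar x) * (Real.sqrt (f x / pstar x) - 1) := by
      rw [mul_sub, mul_one, ← Real.sqrt_mul (hp0 x).le,
        mul_div_cancel₀ _ (ne_of_gt (hp0 x))]
    have hsq : (Real.sqrt (f x) - Real.sqrt (pstar x)) ^ 2
        = pstar x * (Real.sqrt (f x / pstar x) - 1) ^ 2 := by
      rw [hfact, mul_pow, Real.sq_sqrt (hp0 x).le]
    rw [hsq, hZf x]
    rcases le_or_gt (-τ) (Real.log (f x / pstar x)) with h | h
    · rw [max_eq_left h, sqrt_exp_half _ hr]
      rw [mul_comm]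
    · rw [max_eq_right h.le]
      have hlt : Real.sqrt (f x / pstar x) < Real.exp (-τ / 2) := by
        have hids : Real.exp (-τ / 2) = Real.sqrt (Real.exp (-τ)) := by
          rw [← sqrt_exp_half (Real.exp (-τ)) (Real.exp_pos _), Real.log_exp, neg_div]
        rw [hids]
        apply Real.sqrt_lt_sqrt hr.le
        calc f x / pstar x = Real.exp (Real.log (f x / pstar x)) := (Real.exp_log hr).symm
          _ < Real.exp (-τ) := Real.exp_lt_exp.mpr h
      have hlt1 : Real.exp (-τ / 2) < 1 := by
        have := Real.exp_lt_exp.mpr (show -τ / 2 < 0 by linarith)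
        rwa [Real.exp_zero] at this
      have hsr : 0 ≤ Real.sqrt (f x / pstar x) := Real.sqrt_nonneg _
      have hbd : (Real.exp (-τ / 2) - 1) ^ 2 ≤ (Real.sqrt (f x / pstar x) - 1) ^ 2 := by
        nlinarith
      rw [mul_comm]
      exact mul_le_mul_of_nonneg_left hbd (hp0 x).le
  -- pointwise bound
  have hpt : ∀ x, |Zf x| ^ j * pstar x ≤ C * (Real.sqrt (f x) - Real.sqrt (pstar x)) ^ 2 := by
    intro x
    have hzτ : -τ ≤ Zf x := by rw [hZf x]; exact le_max_right _ _
    have hA : |Zf x| ^ j ≤ (Nat.factorial j : ℝ) * 2 ^ j *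
        (Real.exp (|Zf x| / 2) - 1 - |Zf x| / 2) := by
      have h1 := tail_le (|Zf x| / 2) (by positivity) hj
      have hfac : (0:ℝ) < (Nat.factorial j : ℝ) := by positivity
      have h2 : (|Zf x| / 2) ^ j ≤ (Nat.factorial j : ℝ) *
          (Real.exp (|Zf x| / 2) - 1 - |Zf x| / 2) := by
        rw [div_le_iff₀ hfac] at h1
        linarith [h1]
      calc |Zf x| ^ j = 2 ^ j * (|Zf x| / 2) ^ j := by
            rw [← mul_pow]; congr 1; ring
        _ ≤ 2 ^ j * ((Nat.factorial j : ℝ) *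
            (Real.exp (|Zf x| / 2) - 1 - |Zf x| / 2)) := by
            apply mul_le_mul_of_nonneg_left h2 (by positivity)
        _ = (Nat.factorial j : ℝ) * 2 ^ j *
            (Real.exp (|Zf x| / 2) - 1 - |Zf x| / 2) := by ring
    have hB := exp_bound τ hτ c₀ hc₀ (Zf x) hzτ
    have hp := (hp0 x).le
    calc |Zf x| ^ j * pstar x
        ≤ ((Nat.factorial j : ℝ) * 2 ^ j *
            (Real.exp (|Zf x| / 2) - 1 - |Zf x| / 2)) * pstar x :=
          mul_le_mul_of_nonneg_right hA hp
      _ ≤ ((Nat.factorial j : ℝ) * 2 ^ j * (c₀ * (Real.exp (Zf x / 2) - 1) ^ 2)) * pstar x := by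
          apply mul_le_mul_of_nonneg_right _ hp
          apply mul_le_mul_of_nonneg_left hB (by positivity)
      _ = ((Nat.factorial j : ℝ) * 2 ^ j * c₀) * ((Real.exp (Zf x / 2) - 1) ^ 2 * pstar x) := by
          ring
      _ ≤ C * (Real.sqrt (f x) - Real.sqrt (pstar x)) ^ 2 := by
          rw [← hC]
          exact mul_le_mul_of_nonneg_left (hstep3 x) hCpos.le
  -- integrability
  have hfi : Integrable f μ := by
    by_contra hcon
    rw [integral_undef hcon] at hf1
    exact one_ne_zero hf1.symm
  have hpi : Integrable pstar μ := by
    by_contra hcon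
    rw [integral_undef hcon] at hp1
    exact one_ne_zero hp1.symm
  have hgmeas : Measurable fun x => (Real.sqrt (f x) - Real.sqrt (pstar x)) ^ 2 :=
    ((Real.continuous_sqrt.measurable.comp hfmeas).sub
      (Real.continuous_sqrt.measurable.comp hpmeas)).pow_const 2
  have hgint : Integrable (fun x => (Real.sqrt (f x) - Real.sqrt (pstar x)) ^ 2) μ := by
    apply Integrable.mono' ((hfi.const_mul 2).add (hpi.const_mul 2))
      hgmeas.aestronglyMeasurable
    filter_upwards with x
    rw [Real.norm_eq_abs, abs_of_nonneg (sq_nonneg _)]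
    simp only [Pi.add_apply]
    nlinarith [Real.sq_sqrt (hf0 x).le, Real.sq_sqrt (hp0 x).le,
      Real.sqrt_nonneg (f x), Real.sqrt_nonneg (pstar x),
      mul_nonneg (Real.sqrt_nonneg (f x)) (Real.sqrt_nonneg (pstar x))]
  calc ∫ x, |Zf x| ^ j * pstar x ∂μ
      ≤ ∫ x, C * (Real.sqrt (f x) - Real.sqrt (pstar x)) ^ 2 ∂μ := by
        apply integral_mono_of_nonneg
        · filter_upwards with x
          exact mul_nonneg (by positivity) (hp0 x).le
        · exact hgint.const_mul C
        · filter_upwards with x using hpt x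
    _ = C * ∫ x, (Real.sqrt (f x) - Real.sqrt (pstar x)) ^ 2 ∂μ := integral_const_mul C _
    _ = (Nat.factorial j : ℝ) * 2 ^ j * c₀ * H2 := by rw [hH2, hC]
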